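/- There is a universal constant C > 0 such that the following holds. Let f : (ℝ^n)^k → ℝ be a k-linear form with ‖f‖_∞ ≤ 1 whose coefficients all satisfy f̂_{i_1,…,i_k} = ±α for some fixed α ≥ 0. Then for every j ∈ {1,…,k} and ℓ ∈ {1,…,n}, Var(f)² ≤ C · k³ · I_{(j,ℓ)}(f). -/

import Mathlib

noncomputable section

set_option maxHeartbeats 1000000

namespace AASC

open Finset

/-! ### Sign function on booleans -/

def sg (b : Bool) : ℝ := if b then 1 else -1

lemma sg_sq (b : Bool) : sg b ^ 2 = 1 := by cases b <;> simp [sg]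
lemma sg_not (b : Bool) : sg (!b) = - sg b := by cases b <;> simp [sg]

/-! ### Averages over finite types -/

section Avg

variable {X : Type} [Fintype X]

def avg (f : X → ℝ) : ℝ := (∑ x, f x) / (Fintype.card X)

lemma avg_nonneg {f : X → ℝ} (hf : ∀ x, 0 ≤ f x) : 0 ≤ avg f :=
  div_nonneg (Finset.sum_nonneg fun x _ => hf x) (Nat.cast_nonneg _)

lemma avg_le_of_le [Nonempty X] {f : X → ℝ} {c : ℝ} (h : ∀ x, f x ≤ c) : avg f ≤ c := by
  have hcard : 0 < (Fintype.card X : ℝ) := by exact_mod_cast Fintype.card_pos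
  rw [avg, div_le_iff₀ hcard]
  calc ∑ x, f x ≤ ∑ _x : X, c := Finset.sum_le_sum fun x _ => h x
    _ = (Fintype.card X : ℝ) * c := by
        rw [Finset.sum_const, Finset.card_univ, nsmul_eq_mul]
    _ = c * (Fintype.card X : ℝ) := mul_comm _ _

lemma avg_mono {f g : X → ℝ} (h : ∀ x, f x ≤ g x) : avg f ≤ avg g :=
  div_le_div_of_nonneg_right (Finset.sum_le_sum fun x _ => h x) (Nat.cast_nonneg _)

lemma avg_add (f g : X → ℝ) : avg (fun x => f x + g x) = avg f + avg g := by
  rw [avg, avg, avg, Finset.sum_add_distrib, add_div]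

lemma avg_const_mul (c : ℝ) (f : X → ℝ) : avg (fun x => c * f x) = c * avg f := by
  rw [avg, avg, ← Finset.mul_sum, mul_div_assoc]

lemma avg_const [Nonempty X] (c : ℝ) : avg (fun _ : X => c) = c := by
  have hcard : (0:ℝ) < (Fintype.card X : ℝ) := by exact_mod_cast Fintype.card_pos
  rw [avg, Finset.sum_const, Finset.card_univ, nsmul_eq_mul]
  field_simp

lemma avg_sum {ν : Type} (s : Finset ν) (g : ν → X → ℝ) :
    avg (fun x => ∑ v ∈ s, g v x) = ∑ v ∈ s, avg (g v) := by
  unfold avg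
  rw [Finset.sum_comm, Finset.sum_div]

lemma avg_comp_equiv {X' : Type} [Fintype X'] (e : X' ≃ X) (f : X → ℝ) :
    avg (fun x' => f (e x')) = avg f := by
  unfold avg
  rw [Equiv.sum_comp e f, Fintype.card_congr e]

lemma avg_prod {B Z : Type} [Fintype B] [Fintype Z] (f : B × Z → ℝ) :
    avg f = avg (fun b => avg (fun z => f (b, z))) := by
  unfold avg
  rw [Fintype.sum_prod_type, Fintype.card_prod, ← Finset.sum_div, div_div]
  push_cast
  ring

end Avg

/-! ### rpow helper lemmas -/

lemma sq_rpow (x e : ℝ) : (x ^ 2) ^ e = |x| ^ (2 * e) := by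
  rw [← sq_abs, ← Real.rpow_natCast |x| 2, ← Real.rpow_mul (abs_nonneg x)]
  norm_num

lemma self_mul_rpow {X : ℝ} (hX : 0 ≤ X) {e : ℝ} (he : e + 1 ≠ 0) :
    X * X ^ e = X ^ (e + 1) := by
  rcases eq_or_lt_of_le hX with h | h
  · rw [← h, Real.zero_rpow he, zero_mul]
  · rw [Real.rpow_add h, Real.rpow_one]; ring

lemma rpow_add_nonneg {X : ℝ} (hX : 0 ≤ X) {a b : ℝ} (ha : 0 < a) (hb : 0 < b) :
    X ^ a * X ^ b = X ^ (a + b) := by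
  rcases eq_or_lt_of_le hX with h | h
  · rw [← h, Real.zero_rpow ha.ne', Real.zero_rpow (by positivity : a + b ≠ 0), zero_mul]
  · rw [Real.rpow_add h]

/-! ### generalized Hölder via weighted AM-GM -/

lemma sum_geom2 {τ : Type} [Fintype τ] {θ₁ θ₂ : ℝ} (h1 : 0 < θ₁) (h2 : 0 < θ₂)
    (hsum : θ₁ + θ₂ = 1) (f g : τ → ℝ) (hf : ∀ x, 0 ≤ f x) (hg : ∀ x, 0 ≤ g x) :
    ∑ x, f x ^ θ₁ * g x ^ θ₂ ≤ (∑ x, f x) ^ θ₁ * (∑ x, g x) ^ θ₂ := by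
  set F := ∑ x, f x with hF
  set G := ∑ x, g x with hG
  have hF0 : 0 ≤ F := Finset.sum_nonneg fun x _ => hf x
  have hG0 : 0 ≤ G := Finset.sum_nonneg fun x _ => hg x
  rcases eq_or_lt_of_le hF0 with hF' | hF'
  · have hz := (Finset.sum_eq_zero_iff_of_nonneg (fun x _ => hf x)).mp hF'.symm
    have hzz : ∀ x ∈ (univ : Finset τ), f x ^ θ₁ * g x ^ θ₂ = 0 := fun x hx => by
      rw [hz x hx, Real.zero_rpow h1.ne', zero_mul]
    rw [Finset.sum_eq_zero hzz, ← hF', Real.zero_rpow h1.ne', zero_mul]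
  rcases eq_or_lt_of_le hG0 with hG' | hG'
  · have hz := (Finset.sum_eq_zero_iff_of_nonneg (fun x _ => hg x)).mp hG'.symm
    have hzz : ∀ x ∈ (univ : Finset τ), f x ^ θ₁ * g x ^ θ₂ = 0 := fun x hx => by
      rw [hz x hx, Real.zero_rpow h2.ne', mul_zero]
    rw [Finset.sum_eq_zero hzz, ← hG', Real.zero_rpow h2.ne', mul_zero]
  · have hFp := Real.rpow_pos_of_pos hF' θ₁
    have hGp := Real.rpow_pos_of_pos hG' θ₂
    have key : ∀ x, f x ^ θ₁ * g x ^ θ₂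
        ≤ F ^ θ₁ * G ^ θ₂ * (θ₁ * (f x / F) + θ₂ * (g x / G)) := by
      intro x
      have h := Real.geom_mean_le_arith_mean2_weighted h1.le h2.le
        (div_nonneg (hf x) hF0) (div_nonneg (hg x) hG0) hsum
      have h2' := mul_le_mul_of_nonneg_left h
        (le_of_lt (mul_pos hFp hGp))
      calc f x ^ θ₁ * g x ^ θ₂
          = F ^ θ₁ * G ^ θ₂ * ((f x / F) ^ θ₁ * (g x / G) ^ θ₂) := by
            rw [Real.div_rpow (hf x) hF0, Real.div_rpow (hg x) hG0]
            field_simp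
        _ ≤ _ := h2'
    calc ∑ x, f x ^ θ₁ * g x ^ θ₂
        ≤ ∑ x, F ^ θ₁ * G ^ θ₂ * (θ₁ * (f x / F) + θ₂ * (g x / G)) :=
          Finset.sum_le_sum fun x _ => key x
      _ = F ^ θ₁ * G ^ θ₂ * (θ₁ * (F / F) + θ₂ * (G / G)) := by
          rw [← Finset.mul_sum]
          congr 1
          rw [Finset.sum_add_distrib, ← Finset.mul_sum, ← Finset.mul_sum,
            ← Finset.sum_div, ← Finset.sum_div]
      _ = F ^ θ₁ * G ^ θ₂ := by
          rw [div_self hF'.ne', div_self hG'.ne']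
          rw [mul_one, mul_one, hsum, mul_one]

lemma sum_geom3 {τ : Type} [Fintype τ] {θ₁ θ₂ θ₃ : ℝ} (h1 : 0 < θ₁) (h2 : 0 < θ₂) (h3 : 0 < θ₃)
    (hsum : θ₁ + θ₂ + θ₃ = 1) (f g h : τ → ℝ)
    (hf : ∀ x, 0 ≤ f x) (hg : ∀ x, 0 ≤ g x) (hh : ∀ x, 0 ≤ h x) :
    ∑ x, f x ^ θ₁ * g x ^ θ₂ * h x ^ θ₃
      ≤ (∑ x, f x) ^ θ₁ * (∑ x, g x) ^ θ₂ * (∑ x, h x) ^ θ₃ := by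
  set F := ∑ x, f x with hF
  set G := ∑ x, g x with hG
  set H := ∑ x, h x with hH
  have hF0 : 0 ≤ F := Finset.sum_nonneg fun x _ => hf x
  have hG0 : 0 ≤ G := Finset.sum_nonneg fun x _ => hg x
  have hH0 : 0 ≤ H := Finset.sum_nonneg fun x _ => hh x
  rcases eq_or_lt_of_le hF0 with hF' | hF'
  · have hz := (Finset.sum_eq_zero_iff_of_nonneg (fun x _ => hf x)).mp hF'.symm
    have hzz : ∀ x ∈ (univ : Finset τ), f x ^ θ₁ * g x ^ θ₂ * h x ^ θ₃ = 0 := fun x hx => by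
      rw [hz x hx, Real.zero_rpow h1.ne', zero_mul, zero_mul]
    rw [Finset.sum_eq_zero hzz, ← hF', Real.zero_rpow h1.ne', zero_mul, zero_mul]
  rcases eq_or_lt_of_le hG0 with hG' | hG'
  · have hz := (Finset.sum_eq_zero_iff_of_nonneg (fun x _ => hg x)).mp hG'.symm
    have hzz : ∀ x ∈ (univ : Finset τ), f x ^ θ₁ * g x ^ θ₂ * h x ^ θ₃ = 0 := fun x hx => by
      rw [hz x hx, Real.zero_rpow h2.ne', mul_zero, zero_mul]
    rw [Finset.sum_eq_zero hzz, ← hG', Real.zero_rpow h2.ne', mul_zero, zero_mul]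
  rcases eq_or_lt_of_le hH0 with hH' | hH'
  · have hz := (Finset.sum_eq_zero_iff_of_nonneg (fun x _ => hh x)).mp hH'.symm
    have hzz : ∀ x ∈ (univ : Finset τ), f x ^ θ₁ * g x ^ θ₂ * h x ^ θ₃ = 0 := fun x hx => by
      rw [hz x hx, Real.zero_rpow h3.ne', mul_zero]
    rw [Finset.sum_eq_zero hzz, ← hH', Real.zero_rpow h3.ne', mul_zero]
  · have hFp := Real.rpow_pos_of_pos hF' θ₁
    have hGp := Real.rpow_pos_of_pos hG' θ₂
    have hHp := Real.rpow_pos_of_pos hH' θ₃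
    have key : ∀ x, f x ^ θ₁ * g x ^ θ₂ * h x ^ θ₃
        ≤ F ^ θ₁ * G ^ θ₂ * H ^ θ₃ * (θ₁ * (f x / F) + θ₂ * (g x / G) + θ₃ * (h x / H)) := by
      intro x
      have hk := Real.geom_mean_le_arith_mean3_weighted h1.le h2.le h3.le
        (div_nonneg (hf x) hF0) (div_nonneg (hg x) hG0) (div_nonneg (hh x) hH0) hsum
      have h2' := mul_le_mul_of_nonneg_left hk
        (le_of_lt (mul_pos (mul_pos hFp hGp) hHp))
      calc f x ^ θ₁ * g x ^ θ₂ * h x ^ θ₃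
          = F ^ θ₁ * G ^ θ₂ * H ^ θ₃ * ((f x / F) ^ θ₁ * (g x / G) ^ θ₂ * (h x / H) ^ θ₃) := by
            rw [Real.div_rpow (hf x) hF0, Real.div_rpow (hg x) hG0, Real.div_rpow (hh x) hH0]
            field_simp
        _ ≤ _ := h2'
    calc ∑ x, f x ^ θ₁ * g x ^ θ₂ * h x ^ θ₃
        ≤ ∑ x, F ^ θ₁ * G ^ θ₂ * H ^ θ₃ * (θ₁ * (f x / F) + θ₂ * (g x / G) + θ₃ * (h x / H)) :=
          Finset.sum_le_sum fun x _ => key x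
      _ = F ^ θ₁ * G ^ θ₂ * H ^ θ₃ * (θ₁ * (F / F) + θ₂ * (G / G) + θ₃ * (H / H)) := by
          rw [← Finset.mul_sum]
          congr 1
          rw [Finset.sum_add_distrib, Finset.sum_add_distrib, ← Finset.mul_sum, ← Finset.mul_sum,
            ← Finset.mul_sum, ← Finset.sum_div, ← Finset.sum_div, ← Finset.sum_div]
      _ = F ^ θ₁ * G ^ θ₂ * H ^ θ₃ := by
          rw [div_self hF'.ne', div_self hG'.ne', div_self hH'.ne']
          rw [mul_one, mul_one, mul_one, hsum, mul_one]

lemma avg_geom2 {X : Type} [Fintype X] [Nonempty X] {θ₁ θ₂ : ℝ} (h1 : 0 < θ₁) (h2 : 0 < θ₂)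
    (hsum : θ₁ + θ₂ = 1) (f g : X → ℝ) (hf : ∀ x, 0 ≤ f x) (hg : ∀ x, 0 ≤ g x) :
    avg (fun x => f x ^ θ₁ * g x ^ θ₂) ≤ (avg f) ^ θ₁ * (avg g) ^ θ₂ := by
  have hN : (0:ℝ) < (Fintype.card X : ℝ) := by exact_mod_cast Fintype.card_pos
  have hNsplit : (Fintype.card X : ℝ) = (Fintype.card X : ℝ) ^ θ₁ * (Fintype.card X : ℝ) ^ θ₂ := by
    rw [← Real.rpow_add hN, hsum, Real.rpow_one]
  unfold avg
  rw [Real.div_rpow (Finset.sum_nonneg fun x _ => hf x) hN.le,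
      Real.div_rpow (Finset.sum_nonneg fun x _ => hg x) hN.le,
      div_mul_div_comm, ← hNsplit]
  exact div_le_div_of_nonneg_right (sum_geom2 h1 h2 hsum f g hf hg) hN.le

/-! ### Scalar Khintchine inequality (lower bound in L^p, 1 ≤ p < 2) -/

section Khintchine

variable {ι : Type} [Fintype ι] [DecidableEq ι]

def TsumS (s : Finset ι) (a : ι → ℝ) (y : ι → Bool) : ℝ := ∑ ℓ ∈ s, a ℓ * sg (y ℓ)

lemma TsumS_update {s : Finset ι} {ℓ₀ : ι} (h : ℓ₀ ∉ s) (a : ι → ℝ) (y : ι → Bool) (b : Bool) :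
    TsumS s a (Function.update y ℓ₀ b) = TsumS s a y := by
  unfold TsumS
  refine Finset.sum_congr rfl fun ℓ hℓ => ?_
  rw [Function.update_of_ne (fun hh : ℓ = ℓ₀ => h (hh ▸ hℓ))]

lemma sum_flip_eq_zero (ℓ₀ : ι) (f : (ι → Bool) → ℝ)
    (hf : ∀ y, f (Function.update y ℓ₀ (!(y ℓ₀))) = - f y) : ∑ y : ι → Bool, f y = 0 := by
  have hinv : Function.Involutive (fun y : ι → Bool => Function.update y ℓ₀ (!(y ℓ₀))) := by
    intro y
    funext j
    rcases eq_or_ne j ℓ₀ with rfl | hj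
    · simp
    · simp [Function.update_of_ne hj]
  have h1 : ∑ y : ι → Bool, f ((Function.Involutive.toPerm _ hinv) y) = ∑ y : ι → Bool, f y :=
    Equiv.sum_comp _ f
  have h2 : ∑ y : ι → Bool, f ((Function.Involutive.toPerm _ hinv) y)
      = - ∑ y : ι → Bool, f y := by
    calc ∑ y : ι → Bool, f ((Function.Involutive.toPerm _ hinv) y)
        = ∑ y : ι → Bool, - f y := Finset.sum_congr rfl fun y _ => hf y
      _ = - ∑ y : ι → Bool, f y := by rw [Finset.sum_neg_distrib]
  linarith [h1, h2]

lemma avg_sg_mul_eq_zero (ℓ₀ : ι) (g : (ι → Bool) → ℝ)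
    (hg : ∀ y b, g (Function.update y ℓ₀ b) = g y) :
    avg (fun y : ι → Bool => sg (y ℓ₀) * g y) = 0 := by
  unfold avg
  rw [sum_flip_eq_zero ℓ₀ _ ?_, zero_div]
  intro y
  rw [hg y (!(y ℓ₀)), Function.update_self, sg_not]
  ring

lemma avg_TsumS_sq (a : ι → ℝ) (s : Finset ι) :
    avg (fun y : ι → Bool => (TsumS s a y) ^ 2) = ∑ ℓ ∈ s, a ℓ ^ 2 := by
  classical
  induction s using Finset.induction_on with
  | empty => simp [TsumS, avg]
  | @insert ℓ₀ s hℓ₀ ih =>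
    have hpt : (fun y : ι → Bool => (TsumS (insert ℓ₀ s) a y) ^ 2)
        = fun y => (a ℓ₀ ^ 2 + (TsumS s a y) ^ 2) + sg (y ℓ₀) * (2 * a ℓ₀ * TsumS s a y) := by
      funext y
      have h1 : TsumS (insert ℓ₀ s) a y = a ℓ₀ * sg (y ℓ₀) + TsumS s a y := by
        rw [TsumS, Finset.sum_insert hℓ₀]; rfl
      have h2 := sg_sq (y ℓ₀)
      rw [h1]
      linear_combination (a ℓ₀ ^ 2) * h2
    rw [hpt, avg_add (fun y => a ℓ₀ ^ 2 + (TsumS s a y) ^ 2)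
      (fun y => sg (y ℓ₀) * (2 * a ℓ₀ * TsumS s a y)),
      avg_sg_mul_eq_zero ℓ₀ _ (fun y b => by rw [TsumS_update hℓ₀]), add_zero,
      avg_add (fun _ => a ℓ₀ ^ 2) (fun y => (TsumS s a y) ^ 2), avg_const, ih,
      Finset.sum_insert hℓ₀]

lemma avg_TsumS_four (a : ι → ℝ) (s : Finset ι) :
    avg (fun y : ι → Bool => (TsumS s a y) ^ 4) ≤ 3 * (∑ ℓ ∈ s, a ℓ ^ 2) ^ 2 := by
  classical
  induction s using Finset.induction_on with
  | empty => simp [TsumS, avg]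
  | @insert ℓ₀ s hℓ₀ ih =>
    have hpt : (fun y : ι → Bool => (TsumS (insert ℓ₀ s) a y) ^ 4)
        = fun y => (a ℓ₀ ^ 4 + 6 * a ℓ₀ ^ 2 * (TsumS s a y) ^ 2 + (TsumS s a y) ^ 4)
            + sg (y ℓ₀) * (4 * a ℓ₀ ^ 3 * TsumS s a y + 4 * a ℓ₀ * (TsumS s a y) ^ 3) := by
      funext y
      have h1 : TsumS (insert ℓ₀ s) a y = a ℓ₀ * sg (y ℓ₀) + TsumS s a y := by
        rw [TsumS, Finset.sum_insert hℓ₀]; rfl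
      have h2 := sg_sq (y ℓ₀)
      rw [h1]
      linear_combination (a ℓ₀ ^ 4 * (sg (y ℓ₀) ^ 2 + 1) + 4 * a ℓ₀ ^ 3 * TsumS s a y * sg (y ℓ₀)
        + 6 * a ℓ₀ ^ 2 * (TsumS s a y) ^ 2) * h2
    rw [hpt, avg_add (fun y => a ℓ₀ ^ 4 + 6 * a ℓ₀ ^ 2 * (TsumS s a y) ^ 2 + (TsumS s a y) ^ 4)
      (fun y => sg (y ℓ₀) * (4 * a ℓ₀ ^ 3 * TsumS s a y + 4 * a ℓ₀ * (TsumS s a y) ^ 3)),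
      avg_sg_mul_eq_zero ℓ₀ _ (fun y b => by rw [TsumS_update hℓ₀]), add_zero,
      avg_add (fun y => a ℓ₀ ^ 4 + 6 * a ℓ₀ ^ 2 * (TsumS s a y) ^ 2)
        (fun y => (TsumS s a y) ^ 4),
      avg_add (fun _ => a ℓ₀ ^ 4) (fun y => 6 * a ℓ₀ ^ 2 * (TsumS s a y) ^ 2), avg_const,
      Finset.sum_insert hℓ₀]
    have h6 : avg (fun y : ι → Bool => 6 * a ℓ₀ ^ 2 * (TsumS s a y) ^ 2)
        = 6 * a ℓ₀ ^ 2 * (∑ ℓ ∈ s, a ℓ ^ 2) := by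
      rw [avg_const_mul (6 * a ℓ₀ ^ 2) (fun y => (TsumS s a y) ^ 2), avg_TsumS_sq]
    rw [h6]
    have hs0 : 0 ≤ ∑ ℓ ∈ s, a ℓ ^ 2 := Finset.sum_nonneg fun ℓ _ => sq_nonneg _
    nlinarith [sq_nonneg (a ℓ₀), sq_nonneg (a ℓ₀ ^ 2), ih, hs0]

lemma khintchine_scalar {p : ℝ} (hp1 : 1 ≤ p) (hp2 : p < 2) (a : ι → ℝ) :
    (∑ ℓ, a ℓ ^ 2) ^ (p / 2)
      ≤ 3 ^ ((2 - p) / 2) * avg (fun y : ι → Bool => |TsumS univ a y| ^ p) := by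
  have hp0 : (0:ℝ) < p := by linarith
  set e := ∑ ℓ, a ℓ ^ 2 with he
  have he0 : 0 ≤ e := Finset.sum_nonneg fun ℓ _ => sq_nonneg _
  set Mp := avg (fun y : ι → Bool => |TsumS univ a y| ^ p) with hMp
  have hMp0 : 0 ≤ Mp := avg_nonneg fun y => Real.rpow_nonneg (abs_nonneg _) _
  rcases eq_or_lt_of_le he0 with he' | he'
  · rw [← he', Real.zero_rpow (by positivity : p / 2 ≠ 0)]
    positivity
  · set lam := 2 / (4 - p) with hlam
    have h4p : (0:ℝ) < 4 - p := by linarith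
    have hlam0 : 0 < lam := by positivity
    have hlam1 : lam < 1 := by rw [hlam, div_lt_one h4p]; linarith
    have hlamne : lam ≠ 0 := hlam0.ne'
    have hexp : p * lam + 4 * (1 - lam) = 2 := by
      rw [hlam]; field_simp; ring
    have hpt : ∀ y : ι → Bool, (TsumS univ a y) ^ 2
        = (|TsumS univ a y| ^ p) ^ lam * ((TsumS univ a y) ^ 4) ^ (1 - lam) := by
      intro y
      set T := TsumS univ a y with hT
      rcases eq_or_ne T 0 with hT0 | hT0
      · rw [hT0, abs_zero, Real.zero_rpow hp0.ne', Real.zero_rpow hlamne, zero_mul]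
        norm_num
      · have habs : 0 < |T| := abs_pos.mpr hT0
        have h4 : (T ^ 4 : ℝ) = |T| ^ (4:ℕ) := by
          rw [pow_abs, abs_of_nonneg (by positivity : (0:ℝ) ≤ T ^ 4)]
        have h2 : (T ^ 2 : ℝ) = |T| ^ (2:ℕ) := by
          rw [pow_abs, abs_of_nonneg (by positivity : (0:ℝ) ≤ T ^ 2)]
        rw [h4, h2, ← Real.rpow_natCast |T| 2, ← Real.rpow_natCast |T| 4,
          ← Real.rpow_mul (abs_nonneg T), ← Real.rpow_mul (abs_nonneg T),
          ← Real.rpow_add habs]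
        congr 1
        push_cast
        linarith [hexp]
    have hkey : e ≤ Mp ^ lam * (3 * e ^ 2) ^ (1 - lam) := by
      have hm2 := avg_TsumS_sq a (univ : Finset ι)
      have hm4 := avg_TsumS_four a (univ : Finset ι)
      calc e = avg (fun y : ι → Bool => (TsumS univ a y) ^ 2) := hm2.symm
        _ = avg (fun y : ι → Bool =>
              (|TsumS univ a y| ^ p) ^ lam * ((TsumS univ a y) ^ 4) ^ (1 - lam)) :=
            congrArg avg (funext hpt)
        _ ≤ (avg (fun y : ι → Bool => |TsumS univ a y| ^ p)) ^ lam
              * (avg (fun y : ι → Bool => (TsumS univ a y) ^ 4)) ^ (1 - lam) :=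
            avg_geom2 hlam0 (by linarith) (by ring) _ _
              (fun y => Real.rpow_nonneg (abs_nonneg _) _) (fun y => by positivity)
        _ ≤ Mp ^ lam * (3 * e ^ 2) ^ (1 - lam) := by
            apply mul_le_mul_of_nonneg_left _ (Real.rpow_nonneg hMp0 _)
            exact Real.rpow_le_rpow (avg_nonneg fun y => by positivity) hm4 (by linarith)
    have hE1 : (3 * e ^ 2 : ℝ) ^ (1 - lam) = 3 ^ (1 - lam) * e ^ (2 * (1 - lam)) := by
      rw [Real.mul_rpow (by norm_num) (by positivity), ← Real.rpow_natCast e 2,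
        ← Real.rpow_mul he'.le]
      norm_num
    have hsplit : e ^ (2 * lam - 1) * e ^ (2 * (1 - lam)) = e := by
      rw [← Real.rpow_add he', show 2 * lam - 1 + 2 * (1 - lam) = 1 by ring, Real.rpow_one]
    have hepos : (0:ℝ) < e ^ (2 * (1 - lam)) := Real.rpow_pos_of_pos he' _
    have hkey2 : e ^ (2 * lam - 1) ≤ 3 ^ (1 - lam) * Mp ^ lam := by
      have h' : e ^ (2 * lam - 1) * e ^ (2 * (1 - lam))
          ≤ (3 ^ (1 - lam) * Mp ^ lam) * e ^ (2 * (1 - lam)) := by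
        rw [hsplit]
        calc e ≤ Mp ^ lam * (3 * e ^ 2) ^ (1 - lam) := hkey
          _ = (3 ^ (1 - lam) * Mp ^ lam) * e ^ (2 * (1 - lam)) := by rw [hE1]; ring
      exact le_of_mul_le_mul_right h' hepos
    have hfinal := Real.rpow_le_rpow (Real.rpow_nonneg he'.le _) hkey2
      (by positivity : (0:ℝ) ≤ 1 / lam)
    rw [← Real.rpow_mul he'.le,
      Real.mul_rpow (Real.rpow_nonneg (by norm_num) _) (Real.rpow_nonneg hMp0 _),
      ← Real.rpow_mul (by norm_num : (0:ℝ) ≤ 3), ← Real.rpow_mul hMp0] at hfinal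
    have hid1 : (2 * lam - 1) * (1 / lam) = p / 2 := by
      rw [hlam]; field_simp; ring
    have hid2 : (1 - lam) * (1 / lam) = (2 - p) / 2 := by
      rw [hlam]; field_simp; ring
    have hid3 : lam * (1 / lam) = 1 := by field_simp
    rw [hid1, hid2, hid3, Real.rpow_one] at hfinal
    exact hfinal

end Khintchine

/-! ### Reverse Minkowski (superadditivity of the L^q norm for 0 < q ≤ 1) -/

lemma norm_q_superadd {X : Type} [Fintype X] {q : ℝ} (hq0 : 0 < q) (hq1 : q ≤ 1)
    (u w : X → ℝ) (hu : ∀ x, 0 ≤ u x) (hw : ∀ x, 0 ≤ w x) :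
    (avg fun x => u x ^ q) ^ (1/q) + (avg fun x => w x ^ q) ^ (1/q)
      ≤ (avg fun x => (u x + w x) ^ q) ^ (1/q) := by
  set Aq := avg fun x => u x ^ q with hAqdef
  set Bq := avg fun x => w x ^ q with hBqdef
  set Cq := avg fun x => (u x + w x) ^ q with hCqdef
  have hAq0 : 0 ≤ Aq := avg_nonneg fun x => Real.rpow_nonneg (hu x) _
  have hBq0 : 0 ≤ Bq := avg_nonneg fun x => Real.rpow_nonneg (hw x) _
  have hCq0 : 0 ≤ Cq := avg_nonneg fun x => Real.rpow_nonneg (add_nonneg (hu x) (hw x)) _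
  have hmono1 : Aq ≤ Cq := avg_mono fun x =>
    Real.rpow_le_rpow (hu x) (by linarith [hw x]) hq0.le
  have hmono2 : Bq ≤ Cq := avg_mono fun x =>
    Real.rpow_le_rpow (hw x) (by linarith [hu x]) hq0.le
  have hinvq : (1/q) ≠ 0 := by positivity
  rcases eq_or_lt_of_le hAq0 with hA0 | hA0
  · rw [← hA0, Real.zero_rpow hinvq, zero_add]
    exact Real.rpow_le_rpow hBq0 hmono2 (by positivity)
  rcases eq_or_lt_of_le hBq0 with hB0 | hB0
  · rw [← hB0, Real.zero_rpow hinvq, add_zero]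
    exact Real.rpow_le_rpow hAq0 hmono1 (by positivity)
  set A := Aq ^ (1/q) with hAdef
  set B := Bq ^ (1/q) with hBdef
  have hA : 0 < A := Real.rpow_pos_of_pos hA0 _
  have hB : 0 < B := Real.rpow_pos_of_pos hB0 _
  have hABpos : 0 < A + B := by positivity
  set lam := A / (A + B) with hlamdef
  have hlam0 : 0 < lam := by positivity
  have hlam1 : lam < 1 := by rw [hlamdef, div_lt_one hABpos]; linarith
  have h1mlam : (1:ℝ) - lam = B / (A + B) := by rw [hlamdef]; field_simp; ring
  have hpt : ∀ x, lam ^ (1-q) * u x ^ q + (1-lam) ^ (1-q) * w x ^ q ≤ (u x + w x) ^ q := by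
    intro x
    rcases eq_or_lt_of_le (add_nonneg (hu x) (hw x)) with hz | hz
    · have hu0 : u x = 0 := by linarith [hu x, hw x]
      have hw0 : w x = 0 := by linarith [hu x, hw x]
      rw [hu0, hw0]
      norm_num [Real.zero_rpow hq0.ne']
    · have hZq : 0 < (u x + w x) ^ q := Real.rpow_pos_of_pos hz _
      have hk1 := Real.geom_mean_le_arith_mean2_weighted (by linarith : (0:ℝ) ≤ 1 - q) hq0.le
        hlam0.le (div_nonneg (hu x) hz.le) (by ring : (1 - q) + q = 1)
      have hk2 := Real.geom_mean_le_arith_mean2_weighted (by linarith : (0:ℝ) ≤ 1 - q) hq0.le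
        (by linarith : (0:ℝ) ≤ 1 - lam) (div_nonneg (hw x) hz.le) (by ring : (1 - q) + q = 1)
      have hfrac : u x / (u x + w x) + w x / (u x + w x) = 1 := by field_simp
      have hsum1 : lam ^ (1-q) * (u x / (u x + w x)) ^ q
          + (1-lam) ^ (1-q) * (w x / (u x + w x)) ^ q ≤ 1 := by
        have := add_le_add hk1 hk2
        -- RHS: (1-q)*lam + q*(u/Z) + ((1-q)*(1-lam) + q*(w/Z)) = (1-q) + q*(u/Z + w/Z)
        nlinarith [this, hfrac]
      calc lam ^ (1-q) * u x ^ q + (1-lam) ^ (1-q) * w x ^ q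
          = (lam ^ (1-q) * (u x / (u x + w x)) ^ q
              + (1-lam) ^ (1-q) * (w x / (u x + w x)) ^ q) * (u x + w x) ^ q := by
            rw [Real.div_rpow (hu x) hz.le, Real.div_rpow (hw x) hz.le]
            field_simp
        _ ≤ 1 * (u x + w x) ^ q := mul_le_mul_of_nonneg_right hsum1 hZq.le
        _ = (u x + w x) ^ q := one_mul _
  have havg : lam ^ (1-q) * Aq + (1-lam) ^ (1-q) * Bq ≤ Cq := by
    calc lam ^ (1-q) * Aq + (1-lam) ^ (1-q) * Bq
        = avg (fun x => lam ^ (1-q) * u x ^ q + (1-lam) ^ (1-q) * w x ^ q) := by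
          rw [avg_add (fun x => lam ^ (1-q) * u x ^ q) (fun x => (1-lam) ^ (1-q) * w x ^ q),
            avg_const_mul, avg_const_mul]
      _ ≤ Cq := avg_mono hpt
  have hAq_eq : A ^ q = Aq := by
    rw [hAdef, ← Real.rpow_mul hAq0, one_div, inv_mul_cancel₀ hq0.ne', Real.rpow_one]
  have hBq_eq : B ^ q = Bq := by
    rw [hBdef, ← Real.rpow_mul hBq0, one_div, inv_mul_cancel₀ hq0.ne', Real.rpow_one]
  have e1 : lam ^ (1-q) * A ^ q = A * (A+B) ^ (q-1) := by
    rw [hlamdef, Real.div_rpow hA.le hABpos.le, div_mul_eq_mul_div, ← Real.rpow_add hA,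
      show (1-q) + q = 1 by ring, Real.rpow_one,
      show q - 1 = -(1-q) by ring, Real.rpow_neg hABpos.le, div_eq_mul_inv]
  have e2 : (1-lam) ^ (1-q) * B ^ q = B * (A+B) ^ (q-1) := by
    rw [h1mlam, Real.div_rpow hB.le hABpos.le, div_mul_eq_mul_div, ← Real.rpow_add hB,
      show (1-q) + q = 1 by ring, Real.rpow_one,
      show q - 1 = -(1-q) by ring, Real.rpow_neg hABpos.le, div_eq_mul_inv]
  have e3 : A * (A+B) ^ (q-1) + B * (A+B) ^ (q-1) = (A+B) ^ q := by
    have h' : A * (A+B) ^ (q-1) + B * (A+B) ^ (q-1) = (A+B) * (A+B) ^ (q-1) := by ring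
    rw [h']
    nth_rewrite 1 [← Real.rpow_one (A+B)]
    rw [← Real.rpow_add hABpos]
    norm_num
  have hABq : (A+B) ^ q ≤ Cq := by
    rw [← e3, ← e1, ← e2, hAq_eq, hBq_eq]
    exact havg
  have hfin := Real.rpow_le_rpow (Real.rpow_nonneg hABpos.le q) hABq
    (by positivity : (0:ℝ) ≤ 1/q)
  rw [← Real.rpow_mul hABpos.le, mul_one_div, div_self hq0.ne', Real.rpow_one] at hfin
  exact hfin

lemma revMinkowski {X : Type} [Fintype X] {q : ℝ} (hq0 : 0 < q) (hq1 : q ≤ 1)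
    {ν : Type} [DecidableEq ν] (V : ν → X → ℝ) (hV : ∀ v x, 0 ≤ V v x) (s : Finset ν) :
    ∑ v ∈ s, (avg fun x => (V v x) ^ q) ^ (1/q)
      ≤ (avg fun x => (∑ v ∈ s, V v x) ^ q) ^ (1/q) := by
  induction s using Finset.induction_on with
  | empty =>
    simp only [Finset.sum_empty]
    rw [show (fun x : X => (0:ℝ) ^ q) = fun _ : X => (0:ℝ) from
      funext fun x => Real.zero_rpow hq0.ne']
    have : avg (fun _ : X => (0:ℝ)) = 0 := by
      unfold avg; simp
    rw [this, Real.zero_rpow (by positivity : (1:ℝ)/q ≠ 0)]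
  | @insert v₀ s hv₀ ih =>
    rw [Finset.sum_insert hv₀]
    calc (avg fun x => V v₀ x ^ q) ^ (1/q) + ∑ v ∈ s, (avg fun x => (V v x) ^ q) ^ (1/q)
        ≤ (avg fun x => V v₀ x ^ q) ^ (1/q)
            + (avg fun x => (∑ v ∈ s, V v x) ^ q) ^ (1/q) := by linarith [ih]
      _ ≤ (avg fun x => (V v₀ x + ∑ v ∈ s, V v x) ^ q) ^ (1/q) :=
          norm_q_superadd hq0 hq1 _ _ (fun x => hV v₀ x)
            (fun x => Finset.sum_nonneg fun v _ => hV v x)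
      _ = (avg fun x => (∑ v ∈ insert v₀ s, V v x) ^ q) ^ (1/q) := by
          congr 1
          exact congrArg avg (funext fun x => by rw [Finset.sum_insert hv₀])

/-! ### more rpow helpers -/

lemma rpow_half_inv {X Z : ℝ} (hX : 0 ≤ X) {p : ℝ} (hp : 0 < p)
    (h : X ^ (p/2) ≤ Z) : X ≤ Z ^ (2/p) := by
  have h2 := Real.rpow_le_rpow (Real.rpow_nonneg hX _) h (by positivity : (0:ℝ) ≤ 2/p)
  rw [← Real.rpow_mul hX, show (p/2)*(2/p) = 1 by field_simp, Real.rpow_one] at h2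
  exact h2

/-! ### Multilinear forms over boolean inputs -/

def Chi {n : ℕ} {κ : Type} [Fintype κ] (v : κ → Fin n) (x : κ → Fin n → Bool) : ℝ :=
  ∏ j, sg (x j (v j))

def Gf {n : ℕ} {κ : Type} [Fintype κ] [DecidableEq κ] (b : (κ → Fin n) → ℝ)
    (x : κ → Fin n → Bool) : ℝ :=
  ∑ v, b v * Chi v x

/-- an equivalence for function types out of a subsingleton with a chosen point -/
def singleEquiv {γ : Type} [Subsingleton γ] (r₀ : γ) (β : Type) : (γ → β) ≃ β where
  toFun f := f r₀
  invFun y := fun _ => y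
  left_inv f := funext fun r => congrArg f (Subsingleton.elim r₀ r)
  right_inv y := rfl

/-! ### Splitting the coordinates into two blocks -/

section Split

variable {ι : Type} [Fintype ι] [DecidableEq ι] (A : Finset ι)

def mkp {β : Type} (u : {j : ι // j ∈ A} → β) (v : {j : ι // j ∉ A} → β) : ι → β :=
  fun j => if h : j ∈ A then u ⟨j, h⟩ else v ⟨j, h⟩

lemma mkp_mem {β : Type} (u : {j : ι // j ∈ A} → β) (v : {j : ι // j ∉ A} → β)
    (l : {j : ι // j ∈ A}) : mkp A u v l.1 = u l :=
  dif_pos l.2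

lemma mkp_not_mem {β : Type} (u : {j : ι // j ∈ A} → β) (v : {j : ι // j ∉ A} → β)
    (r : {j : ι // j ∉ A}) : mkp A u v r.1 = v r :=
  dif_neg r.2

def splitEquiv (β : Type) :
    (({j : ι // j ∈ A} → β) × ({j : ι // j ∉ A} → β)) ≃ (ι → β) where
  toFun p := mkp A p.1 p.2
  invFun i := (fun l => i l.1, fun r => i r.1)
  left_inv p := by
    refine Prod.ext ?_ ?_
    · funext l
      exact mkp_mem A p.1 p.2 l
    · funext r
      exact mkp_not_mem A p.1 p.2 r
  right_inv i := by
    funext j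
    by_cases h : j ∈ A
    · exact dif_pos h
    · exact dif_neg h

lemma sum_split {β : Type} [Fintype β] (f : (ι → β) → ℝ) :
    ∑ i, f i = ∑ u : {j : ι // j ∈ A} → β, ∑ v : {j : ι // j ∉ A} → β, f (mkp A u v) := by
  rw [← Equiv.sum_comp (splitEquiv A β) f, Fintype.sum_prod_type]
  rfl

lemma avg_split {β : Type} [Fintype β] (f : (ι → β) → ℝ) :
    avg f = avg (fun u : {j : ι // j ∈ A} → β =>
      avg (fun v : {j : ι // j ∉ A} → β => f (mkp A u v))) := by
  rw [← avg_comp_equiv (splitEquiv A β) f, avg_prod]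
  rfl

lemma prod_split (g : ι → ℝ) :
    ∏ j, g j = (∏ l : {j : ι // j ∈ A}, g l.1) * ∏ r : {j : ι // j ∉ A}, g r.1 := by
  rw [← Finset.prod_mul_prod_compl A g]
  congr 1
  · exact Finset.prod_subtype A (fun x => Iff.rfl) g
  · exact Finset.prod_subtype Aᶜ (fun x => Finset.mem_compl) g

lemma Chi_split {n : ℕ} (u : {j : ι // j ∈ A} → Fin n) (v : {j : ι // j ∉ A} → Fin n)
    (x₁ : {j : ι // j ∈ A} → Fin n → Bool) (x₂ : {j : ι // j ∉ A} → Fin n → Bool) :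
    Chi (mkp A u v) (mkp A x₁ x₂) = Chi u x₁ * Chi v x₂ := by
  unfold Chi
  rw [prod_split A (fun j => sg (mkp A x₁ x₂ j (mkp A u v j)))]
  congr 1
  · exact Finset.prod_congr rfl fun l _ => by rw [mkp_mem A x₁ x₂ l, mkp_mem A u v l]
  · exact Finset.prod_congr rfl fun r _ => by rw [mkp_not_mem A x₁ x₂ r, mkp_not_mem A u v r]

lemma Gf_split {n : ℕ} (b : (ι → Fin n) → ℝ) (x₁ : {j : ι // j ∈ A} → Fin n → Bool)
    (x₂ : {j : ι // j ∉ A} → Fin n → Bool) :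
    Gf b (mkp A x₁ x₂) = ∑ u : {j : ι // j ∈ A} → Fin n, ∑ v : {j : ι // j ∉ A} → Fin n,
      b (mkp A u v) * (Chi u x₁ * Chi v x₂) := by
  unfold Gf
  rw [sum_split A (fun i => b i * Chi i (mkp A x₁ x₂))]
  exact Finset.sum_congr rfl fun u _ => Finset.sum_congr rfl fun v _ => by
    rw [Chi_split A]

end Split

/-! ### Khintchine inequality for multilinear chaos -/

lemma chaos_khintchine {n : ℕ} :
    ∀ (d : ℕ) (κ : Type) [Fintype κ] [DecidableEq κ], Fintype.card κ = d →
    ∀ (p : ℝ), 1 ≤ p → p < 2 → ∀ (b : (κ → Fin n) → ℝ),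
    (∑ v, b v ^ 2) ^ (p/2)
      ≤ 3 ^ ((d : ℝ) * (2-p)/2) * avg (fun x : κ → Fin n → Bool => |Gf b x| ^ p) := by
  intro d
  induction d with
  | zero =>
    intro κ _ _ hcard p hp1 hp2 b
    haveI : IsEmpty κ := Fintype.card_eq_zero_iff.mp hcard
    have h1 : (∑ v : κ → Fin n, b v ^ 2) = b default ^ 2 := Fintype.sum_unique _
    have hGf : ∀ x : κ → Fin n → Bool, Gf b x = b default := by
      intro x
      unfold Gf Chi
      rw [Fintype.sum_unique, Finset.univ_eq_empty, Finset.prod_empty, mul_one]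
    have h2 : avg (fun x : κ → Fin n → Bool => |Gf b x| ^ p) = |b default| ^ p := by
      rw [show (fun x : κ → Fin n → Bool => |Gf b x| ^ p) = fun _ => |b default| ^ p from
        funext fun x => by rw [hGf x], avg_const]
    rw [h1, h2, sq_rpow, show (2:ℝ) * (p/2) = p by ring,
      show ((0:ℕ):ℝ) * (2-p)/2 = 0 by norm_num, Real.rpow_zero, one_mul]
  | succ d ih =>
    intro κ instF instD hcard p hp1 hp2 b
    have hp0 : (0:ℝ) < p := by linarith
    have hne : Nonempty κ := Fintype.card_pos_iff.mp (by omega)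
    obtain ⟨j₀⟩ := hne
    set A : Finset κ := Finset.univ.erase j₀ with hA
    have hcardA : A.card = d := by
      rw [hA, Finset.card_erase_of_mem (Finset.mem_univ j₀), Finset.card_univ, hcard]
      omega
    have hj₀A : j₀ ∉ A := by rw [hA]; exact Finset.notMem_erase j₀ _
    have cardL : Fintype.card {j : κ // j ∈ A} = d := (Fintype.card_coe A).trans hcardA
    have cardR : Fintype.card {j : κ // j ∉ A} = 1 := by
      have h := Fintype.card_subtype_compl (fun j : κ => j ∈ A)
      rw [show Fintype.card {j : κ // j ∉ A} = Fintype.card {j : κ // ¬ j ∈ A} from rfl, h,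
        (Fintype.card_coe A).trans hcardA, hcard]
      omega
    haveI hsubR : Subsingleton {j : κ // j ∉ A} :=
      Fintype.card_le_one_iff_subsingleton.mp (le_of_eq cardR)
    set r₀ : {j : κ // j ∉ A} := ⟨j₀, hj₀A⟩ with hr₀
    haveI : Unique {j : κ // j ∉ A} := ⟨⟨r₀⟩, fun r => Subsingleton.elim r r₀⟩
    have hChiR : ∀ (v : {j : κ // j ∉ A} → Fin n) (x₂ : {j : κ // j ∉ A} → Fin n → Bool),
        Chi v x₂ = sg (x₂ r₀ (v r₀)) := by
      intro v x₂
      unfold Chi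
      have hall : ∀ j : {j : κ // j ∉ A}, sg (x₂ j (v j)) = sg (x₂ r₀ (v r₀)) := fun j => by
        rw [Subsingleton.elim j r₀]
      rw [Finset.prod_congr rfl (fun j _ => hall j), Finset.prod_const, Finset.card_univ,
        cardR, pow_one]
    -- transported coefficients
    have htransport : ∑ v' : κ → Fin n, b v' ^ 2
        = ∑ v : {j : κ // j ∉ A} → Fin n, ∑ u : {j : κ // j ∈ A} → Fin n,
            b (mkp A u v) ^ 2 := by
      rw [sum_split A (fun i => b i ^ 2), Finset.sum_comm]
    -- the slice forms
    have ihv : ∀ v : {j : κ // j ∉ A} → Fin n,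
        (∑ u : {j : κ // j ∈ A} → Fin n, b (mkp A u v) ^ 2) ^ (p/2)
          ≤ 3 ^ ((d:ℝ) * (2-p)/2) * avg (fun x₁ : {j : κ // j ∈ A} → Fin n → Bool =>
              |Gf (fun u => b (mkp A u v)) x₁| ^ p) :=
      fun v => ih {j : κ // j ∈ A} cardL p hp1 hp2 (fun u => b (mkp A u v))
    have hstep1 : ∀ v : {j : κ // j ∉ A} → Fin n,
        (∑ u : {j : κ // j ∈ A} → Fin n, b (mkp A u v) ^ 2)
          ≤ (3 ^ ((d:ℝ) * (2-p)/2) * avg (fun x₁ : {j : κ // j ∈ A} → Fin n → Bool =>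
              |Gf (fun u => b (mkp A u v)) x₁| ^ p)) ^ (2/p) :=
      fun v => rpow_half_inv (Finset.sum_nonneg fun u _ => sq_nonneg _) hp0 (ihv v)
    -- per x₁ scalar Khintchine
    have hK : ∀ x₁ : {j : κ // j ∈ A} → Fin n → Bool,
        (∑ v : {j : κ // j ∉ A} → Fin n, (Gf (fun u => b (mkp A u v)) x₁) ^ 2) ^ (p/2)
          ≤ 3 ^ ((2-p)/2) * avg (fun x₂ : {j : κ // j ∉ A} → Fin n → Bool =>
              |Gf b (mkp A x₁ x₂)| ^ p) := by
      intro x₁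
      set aF : ({j : κ // j ∉ A} → Fin n) → ℝ := fun v => Gf (fun u => b (mkp A u v)) x₁
        with haF
      set eV : ({j : κ // j ∉ A} → Fin n) ≃ Fin n := singleEquiv r₀ (Fin n) with heV
      set eX : ({j : κ // j ∉ A} → Fin n → Bool) ≃ (Fin n → Bool) :=
        singleEquiv r₀ (Fin n → Bool) with heX
      set a' : Fin n → ℝ := fun ℓ => aF (eV.symm ℓ) with ha'
      have hsum_a : ∑ v : {j : κ // j ∉ A} → Fin n, aF v ^ 2 = ∑ ℓ : Fin n, a' ℓ ^ 2 :=
        (Equiv.sum_comp eV.symm (fun v => aF v ^ 2)).symm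
      have hid : ∀ x₂ : {j : κ // j ∉ A} → Fin n → Bool,
          TsumS univ a' (eX x₂) = Gf b (mkp A x₁ x₂) := by
        intro x₂
        rw [Gf_split A b x₁ x₂, Finset.sum_comm]
        have hv : ∀ v : {j : κ // j ∉ A} → Fin n,
            ∑ u : {j : κ // j ∈ A} → Fin n, b (mkp A u v) * (Chi u x₁ * Chi v x₂)
              = aF v * sg (x₂ r₀ (v r₀)) := by
          intro v
          rw [hChiR v x₂, haF]
          show _ = (∑ u : {j : κ // j ∈ A} → Fin n, b (mkp A u v) * Chi u x₁) * sg (x₂ r₀ (v r₀))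
          rw [Finset.sum_mul]
          exact Finset.sum_congr rfl fun u _ => by ring
        rw [Finset.sum_congr rfl fun v _ => hv v]
        rw [show (TsumS univ a' (eX x₂)) = ∑ ℓ : Fin n, a' ℓ * sg (x₂ r₀ ℓ) from rfl]
        rw [← Equiv.sum_comp eV.symm (fun v => aF v * sg (x₂ r₀ (v r₀)))]
        rfl
      have htrans : avg (fun y : Fin n → Bool => |TsumS univ a' y| ^ p)
          = avg (fun x₂ : {j : κ // j ∉ A} → Fin n → Bool => |Gf b (mkp A x₁ x₂)| ^ p) := by
        rw [← avg_comp_equiv eX (fun y => |TsumS univ a' y| ^ p)]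
        exact congrArg avg (funext fun x₂ => by rw [hid x₂])
      rw [hsum_a, ← htrans]
      exact khintchine_scalar hp1 hp2 a'
    -- average over x₁
    set Mtot := avg (fun x : κ → Fin n → Bool => |Gf b x| ^ p) with hMtot
    have hMtot0 : 0 ≤ Mtot := avg_nonneg fun x => Real.rpow_nonneg (abs_nonneg _) _
    have hK2 : avg (fun x₁ : {j : κ // j ∈ A} → Fin n → Bool =>
        (∑ v : {j : κ // j ∉ A} → Fin n, (Gf (fun u => b (mkp A u v)) x₁) ^ 2) ^ (p/2))
          ≤ 3 ^ ((2-p)/2) * Mtot := by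
      calc avg (fun x₁ : {j : κ // j ∈ A} → Fin n → Bool =>
            (∑ v : {j : κ // j ∉ A} → Fin n, (Gf (fun u => b (mkp A u v)) x₁) ^ 2) ^ (p/2))
          ≤ avg (fun x₁ : {j : κ // j ∈ A} → Fin n → Bool => 3 ^ ((2-p)/2)
              * avg (fun x₂ : {j : κ // j ∉ A} → Fin n → Bool =>
                  |Gf b (mkp A x₁ x₂)| ^ p)) := avg_mono hK
        _ = 3 ^ ((2-p)/2) * avg (fun x₁ : {j : κ // j ∈ A} → Fin n → Bool =>
              avg (fun x₂ : {j : κ // j ∉ A} → Fin n → Bool => |Gf b (mkp A x₁ x₂)| ^ p)) :=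
            avg_const_mul _ _
        _ = 3 ^ ((2-p)/2) * Mtot := by
            rw [hMtot, avg_split A (fun x => |Gf b x| ^ p)]
    -- reverse Minkowski
    have hq0 : (0:ℝ) < p/2 := by positivity
    have hq1 : p/2 ≤ 1 := by linarith
    have hrm := revMinkowski hq0 hq1
      (V := fun (v : {j : κ // j ∉ A} → Fin n) (x₁ : {j : κ // j ∈ A} → Fin n → Bool) =>
        (Gf (fun u => b (mkp A u v)) x₁) ^ 2) (fun v x => sq_nonneg _) Finset.univ
    rw [show 1/(p/2) = 2/p from one_div_div p 2] at hrm
    have hVeq : ∀ v : {j : κ // j ∉ A} → Fin n,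
        (fun x₁ : {j : κ // j ∈ A} → Fin n → Bool =>
          ((Gf (fun u => b (mkp A u v)) x₁) ^ 2) ^ (p/2))
        = fun x₁ => |Gf (fun u => b (mkp A u v)) x₁| ^ p := fun v => funext fun x₁ => by
      rw [sq_rpow, show (2:ℝ)*(p/2) = p by ring]
    -- assemble the chain
    have hchain : ∑ v' : κ → Fin n, b v' ^ 2
        ≤ (3 ^ ((d:ℝ) * (2-p)/2) * (3 ^ ((2-p)/2) * Mtot)) ^ (2/p) := by
      have c1nn : (0:ℝ) ≤ 3 ^ ((d:ℝ) * (2-p)/2) := Real.rpow_nonneg (by norm_num) _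
      have c2nn : (0:ℝ) ≤ 3 ^ ((2-p)/2) * Mtot :=
        mul_nonneg (Real.rpow_nonneg (by norm_num) _) hMtot0
      calc ∑ v' : κ → Fin n, b v' ^ 2
          = ∑ v : {j : κ // j ∉ A} → Fin n, ∑ u : {j : κ // j ∈ A} → Fin n,
              b (mkp A u v) ^ 2 := htransport
        _ ≤ ∑ v : {j : κ // j ∉ A} → Fin n,
              (3 ^ ((d:ℝ) * (2-p)/2) * avg (fun x₁ : {j : κ // j ∈ A} → Fin n → Bool =>
                |Gf (fun u => b (mkp A u v)) x₁| ^ p)) ^ (2/p) :=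
            Finset.sum_le_sum fun v _ => hstep1 v
        _ = (3 ^ ((d:ℝ) * (2-p)/2)) ^ (2/p) * ∑ v : {j : κ // j ∉ A} → Fin n,
              (avg (fun x₁ : {j : κ // j ∈ A} → Fin n → Bool =>
                |Gf (fun u => b (mkp A u v)) x₁| ^ p)) ^ (2/p) := by
            rw [Finset.mul_sum]
            exact Finset.sum_congr rfl fun v _ => by
              rw [Real.mul_rpow c1nn (avg_nonneg fun x => Real.rpow_nonneg (abs_nonneg _) _)]
        _ ≤ (3 ^ ((d:ℝ) * (2-p)/2)) ^ (2/p) * (avg (fun x₁ : {j : κ // j ∈ A} → Fin n → Bool =>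
              (∑ v : {j : κ // j ∉ A} → Fin n, (Gf (fun u => b (mkp A u v)) x₁) ^ 2) ^ (p/2)))
                ^ (2/p) := by
            apply mul_le_mul_of_nonneg_left _ (Real.rpow_nonneg c1nn _)
            calc ∑ v : {j : κ // j ∉ A} → Fin n,
                  (avg (fun x₁ : {j : κ // j ∈ A} → Fin n → Bool =>
                    |Gf (fun u => b (mkp A u v)) x₁| ^ p)) ^ (2/p)
                = ∑ v : {j : κ // j ∉ A} → Fin n,
                    (avg (fun x₁ : {j : κ // j ∈ A} → Fin n → Bool =>
                      ((Gf (fun u => b (mkp A u v)) x₁) ^ 2) ^ (p/2))) ^ (2/p) :=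
                  Finset.sum_congr rfl fun v _ => by rw [hVeq v]
              _ ≤ _ := hrm
        _ ≤ (3 ^ ((d:ℝ) * (2-p)/2)) ^ (2/p) * (3 ^ ((2-p)/2) * Mtot) ^ (2/p) := by
            apply mul_le_mul_of_nonneg_left _ (Real.rpow_nonneg c1nn _)
            exact Real.rpow_le_rpow (avg_nonneg fun x => Real.rpow_nonneg
              (Finset.sum_nonneg fun v _ => sq_nonneg _) _) hK2 (by positivity)
        _ = (3 ^ ((d:ℝ) * (2-p)/2) * (3 ^ ((2-p)/2) * Mtot)) ^ (2/p) :=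
            (Real.mul_rpow c1nn c2nn).symm
    -- raise to the power p/2
    have hfin := Real.rpow_le_rpow (Finset.sum_nonneg fun v _ => sq_nonneg _) hchain
      (le_of_lt hq0)
    rw [← Real.rpow_mul (by positivity), show (2/p)*(p/2) = 1 by field_simp, Real.rpow_one]
      at hfin
    calc (∑ v : κ → Fin n, b v ^ 2) ^ (p/2)
        ≤ 3 ^ ((d:ℝ) * (2-p)/2) * (3 ^ ((2-p)/2) * Mtot) := hfin
      _ = 3 ^ (((d:ℕ)+1 : ℝ) * (2-p)/2) * Mtot := by
          rw [← mul_assoc, ← Real.rpow_add (by norm_num : (0:ℝ) < 3)]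
          congr 2
          ring
      _ = 3 ^ (((d+1:ℕ) : ℝ) * (2-p)/2) * Mtot := by norm_num

/-! ### The Bohnenblust–Hille-type inequality with constant `3^(t/2)` for `card ι ≤ 2^t` -/

lemma BH {n : ℕ} :
    ∀ (t : ℕ), ∀ (ι : Type) [Fintype ι] [DecidableEq ι],
    1 ≤ Fintype.card ι → Fintype.card ι ≤ 2 ^ t →
    ∀ (c : (ι → Fin n) → ℝ) (s : ℝ), (∀ x, |Gf c x| ≤ s) →
    ∑ i, |c i| ^ (2 * (Fintype.card ι : ℝ) / ((Fintype.card ι : ℝ) + 1))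
      ≤ ((3:ℝ) ^ ((t:ℝ)/2) * s)
          ^ (2 * (Fintype.card ι : ℝ) / ((Fintype.card ι : ℝ) + 1)) := by
  intro t
  induction t with
  | zero =>
    intro ι _ _ h1 h2 c s hbound
    classical
    have hcard : Fintype.card ι = 1 := le_antisymm (by simpa using h2) h1
    have hρ : 2 * (Fintype.card ι : ℝ) / ((Fintype.card ι : ℝ) + 1) = 1 := by
      rw [hcard]; norm_num
    simp only [hρ, Real.rpow_one, Nat.cast_zero, zero_div, Real.rpow_zero, one_mul]
    obtain ⟨j₀, hj₀⟩ := Fintype.card_eq_one_iff.mp hcard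
    haveI : Subsingleton ι := Fintype.card_le_one_iff_subsingleton.mp (le_of_eq hcard)
    set x : ι → Fin n → Bool := fun _ ℓ => if 0 ≤ c (fun _ => ℓ) then true else false with hx
    have hconst : ∀ i : ι → Fin n, (fun _ : ι => i j₀) = i := fun i =>
      funext fun j => (congrArg i (hj₀ j)).symm
    have hGf : Gf c x = ∑ i : ι → Fin n, |c i| := by
      unfold Gf Chi
      refine Finset.sum_congr rfl fun i _ => ?_
      have hprod : ∏ j : ι, sg (x j (i j)) = sg (x j₀ (i j₀)) := by
        have hall : ∀ j : ι, sg (x j (i j)) = sg (x j₀ (i j₀)) := fun j => by rw [hj₀ j]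
        rw [Finset.prod_congr rfl fun j _ => hall j, Finset.prod_const, Finset.card_univ,
          hcard, pow_one]
      rw [hprod]
      simp only [hx]
      rw [hconst i]
      by_cases hpos : 0 ≤ c i
      · rw [if_pos hpos, show sg true = 1 from rfl, mul_one, abs_of_nonneg hpos]
      · rw [if_neg hpos, show sg false = -1 from rfl, abs_of_neg (lt_of_not_ge hpos)]
        ring
    rw [← hGf]
    exact le_trans (le_abs_self _) (hbound x)
  | succ t ih =>
    intro ι instF instD h1 h2 c s hbound
    classical
    have hs0 : 0 ≤ s := le_trans (abs_nonneg _) (hbound (fun _ _ => true))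
    by_cases hmle : Fintype.card ι ≤ 2 ^ t
    · have h := ih ι h1 hmle c s hbound
      refine le_trans h ?_
      have hρnn : 0 ≤ 2 * (Fintype.card ι : ℝ) / ((Fintype.card ι : ℝ) + 1) := by positivity
      apply Real.rpow_le_rpow (by positivity) _ hρnn
      apply mul_le_mul_of_nonneg_right _ hs0
      apply Real.rpow_le_rpow_of_exponent_le (by norm_num)
      push_cast
      linarith
    · push_neg at hmle
      -- sizes
      set m := Fintype.card ι with hmdef
      set m₁ := 2 ^ t with hm₁def
      set m₂ := m - 2 ^ t with hm₂def
      have hm₁1 : 1 ≤ m₁ := Nat.one_le_two_pow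
      have hm₂1 : 1 ≤ m₂ := by omega
      have hpow : (2:ℕ) ^ (t+1) = 2 ^ t + 2 ^ t := by rw [pow_succ]; ring
      have hm₂t : m₂ ≤ 2 ^ t := by omega
      have hm12 : m₁ + m₂ = m := by omega
      -- choose the splitting set
      obtain ⟨A, hAsub, hAcard⟩ := Finset.exists_subset_card_eq
        (by rw [Finset.card_univ]; omega : m₁ ≤ (Finset.univ : Finset ι).card)
      have cardL : Fintype.card {j : ι // j ∈ A} = m₁ := (Fintype.card_coe A).trans hAcard
      have cardR : Fintype.card {j : ι // j ∉ A} = m₂ := by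
        have h := Fintype.card_subtype_compl (fun j : ι => j ∈ A)
        rw [show Fintype.card {j : ι // j ∉ A} = Fintype.card {j : ι // ¬ j ∈ A} from rfl, h,
          (Fintype.card_coe A).trans hAcard, ← hmdef]
      -- real parameters
      have hm1R : (1:ℝ) ≤ (m:ℝ) := by exact_mod_cast h1
      have hμ₁1 : (1:ℝ) ≤ (m₁:ℝ) := by exact_mod_cast hm₁1
      have hμ₂1 : (1:ℝ) ≤ (m₂:ℝ) := by exact_mod_cast hm₂1
      have hμm : (m:ℝ) = (m₁:ℝ) + (m₂:ℝ) := by exact_mod_cast hm12.symm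
      set p₁ : ℝ := 2 * (m₁:ℝ) / ((m₁:ℝ) + 1) with hp₁
      set p₂ : ℝ := 2 * (m₂:ℝ) / ((m₂:ℝ) + 1) with hp₂
      set ρ : ℝ := 2 * (m:ℝ) / ((m:ℝ) + 1) with hρ
      have hp₁1 : 1 ≤ p₁ := by rw [hp₁, le_div_iff₀ (by linarith)]; linarith
      have hp₁2 : p₁ < 2 := by rw [hp₁, div_lt_iff₀ (by linarith)]; linarith
      have hp₂1 : 1 ≤ p₂ := by rw [hp₂, le_div_iff₀ (by linarith)]; linarith
      have hp₂2 : p₂ < 2 := by rw [hp₂, div_lt_iff₀ (by linarith)]; linarith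
      have hp₁0 : (0:ℝ) < p₁ := by linarith
      have hp₂0 : (0:ℝ) < p₂ := by linarith
      have hρ0 : (0:ℝ) < ρ := by
        rw [hρ]; apply div_pos <;> linarith
      set θ₁ : ℝ := (m₂:ℝ) / ((m:ℝ) + 1) with hθ₁
      set θ₂ : ℝ := (m₁:ℝ) / ((m:ℝ) + 1) with hθ₂
      set θ₃ : ℝ := 1 / ((m:ℝ) + 1) with hθ₃
      have hθ₁0 : 0 < θ₁ := by rw [hθ₁]; apply div_pos <;> linarith
      have hθ₂0 : 0 < θ₂ := by rw [hθ₂]; apply div_pos <;> linarith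
      have hθ₃0 : 0 < θ₃ := by rw [hθ₃]; apply div_pos <;> linarith
      have hθsum : θ₁ + θ₂ + θ₃ = 1 := by
        rw [hθ₁, hθ₂, hθ₃, ← add_div, ← add_div,
          show (m₂:ℝ) + (m₁:ℝ) + 1 = (m:ℝ) + 1 by linarith [hμm]]
        exact div_self (by linarith)
      -- block quantities
      set P : ({j : ι // j ∉ A} → Fin n) → ℝ :=
        fun v => ∑ u : {j : ι // j ∈ A} → Fin n, c (mkp A u v) ^ 2 with hPdef
      set Q : ({j : ι // j ∈ A} → Fin n) → ℝ :=
        fun u => ∑ v : {j : ι // j ∉ A} → Fin n, c (mkp A u v) ^ 2 with hQdef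
      have hP0 : ∀ v, 0 ≤ P v := fun v => Finset.sum_nonneg fun u _ => sq_nonneg _
      have hQ0 : ∀ u, 0 ≤ Q u := fun u => Finset.sum_nonneg fun v _ => sq_nonneg _
      set W₁ := ∑ u : {j : ι // j ∈ A} → Fin n, Q u ^ (p₁/2) with hW₁def
      set W₂ := ∑ v : {j : ι // j ∉ A} → Fin n, P v ^ (p₂/2) with hW₂def
      have hW₁0 : 0 ≤ W₁ := Finset.sum_nonneg fun u _ => Real.rpow_nonneg (hQ0 u) _
      have hW₂0 : 0 ≤ W₂ := Finset.sum_nonneg fun v _ => Real.rpow_nonneg (hP0 v) _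
      -- pointwise Hölder decomposition
      have hpoint : ∀ (u : {j : ι // j ∈ A} → Fin n) (v : {j : ι // j ∉ A} → Fin n),
          |c (mkp A u v)| ^ ρ
            = (c (mkp A u v) ^ 2 * P v ^ ((p₂ - 2)/2)) ^ θ₁
              * (c (mkp A u v) ^ 2 * Q u ^ ((p₁ - 2)/2)) ^ θ₂
              * (Q u ^ (p₁/2) * P v ^ (p₂/2)) ^ θ₃ := by
        intro u v
        rcases eq_or_ne (c (mkp A u v)) 0 with hz | hz
        · rw [hz, abs_zero, Real.zero_rpow hρ0.ne', show (0:ℝ)^2 = 0 by norm_num, zero_mul,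
            zero_mul, Real.zero_rpow hθ₁0.ne', zero_mul, zero_mul]
        · have hc2 : 0 < c (mkp A u v) ^ 2 := by positivity
          have hPv : 0 < P v := lt_of_lt_of_le hc2 (Finset.single_le_sum
            (f := fun u' => c (mkp A u' v) ^ 2) (fun u' _ => sq_nonneg _) (Finset.mem_univ u))
          have hQu : 0 < Q u := lt_of_lt_of_le hc2 (Finset.single_le_sum
            (f := fun v' => c (mkp A u v') ^ 2) (fun v' _ => sq_nonneg _) (Finset.mem_univ v))
          have hPP : P v ^ ((p₂-2)/2 * θ₁) * P v ^ (p₂/2 * θ₃) = 1 := by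
            rw [← Real.rpow_add hPv, show (p₂-2)/2 * θ₁ + p₂/2 * θ₃ = 0 from by
              rw [hp₂, hθ₁, hθ₃]; field_simp; ring, Real.rpow_zero]
          have hQQ : Q u ^ ((p₁-2)/2 * θ₂) * Q u ^ (p₁/2 * θ₃) = 1 := by
            rw [← Real.rpow_add hQu, show (p₁-2)/2 * θ₂ + p₁/2 * θ₃ = 0 from by
              rw [hp₁, hθ₂, hθ₃]; field_simp; ring, Real.rpow_zero]
          have hCC : (c (mkp A u v) ^ 2) ^ θ₁ * (c (mkp A u v) ^ 2) ^ θ₂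
              = |c (mkp A u v)| ^ ρ := by
            rw [← Real.rpow_add hc2, sq_rpow, show 2 * (θ₁ + θ₂) = ρ from by
              rw [hθ₁, hθ₂, hρ, hμm]; field_simp; ring]
          rw [Real.mul_rpow hc2.le (Real.rpow_nonneg hPv.le _),
            Real.mul_rpow hc2.le (Real.rpow_nonneg hQu.le _),
            Real.mul_rpow (Real.rpow_nonneg hQu.le _) (Real.rpow_nonneg hPv.le _),
            ← Real.rpow_mul hPv.le, ← Real.rpow_mul hQu.le, ← Real.rpow_mul hQu.le,
            ← Real.rpow_mul hPv.le]
          calc |c (mkp A u v)| ^ ρ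
              = ((c (mkp A u v) ^ 2) ^ θ₁ * (c (mkp A u v) ^ 2) ^ θ₂)
                * (P v ^ ((p₂-2)/2 * θ₁) * P v ^ (p₂/2 * θ₃))
                * (Q u ^ ((p₁-2)/2 * θ₂) * Q u ^ (p₁/2 * θ₃)) := by
                rw [hPP, hQQ, hCC, mul_one, mul_one]
            _ = _ := by ring
      -- sums of the three Hölder factors
      have hsum_f₁ : ∑ w : (({j : ι // j ∈ A} → Fin n) × ({j : ι // j ∉ A} → Fin n)),
          c (mkp A w.1 w.2) ^ 2 * P w.2 ^ ((p₂ - 2)/2) = W₂ := by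
        rw [Fintype.sum_prod_type_right, hW₂def]
        refine Finset.sum_congr rfl fun v _ => ?_
        dsimp only
        rw [← Finset.sum_mul, show (∑ u : {j : ι // j ∈ A} → Fin n, c (mkp A u v) ^ 2) = P v
          from rfl, self_mul_rpow (hP0 v)
            (by rw [show (p₂-2)/2 + 1 = p₂/2 by ring]; exact ne_of_gt (by linarith)),
          show (p₂-2)/2 + 1 = p₂/2 by ring]
      have hsum_f₂ : ∑ w : (({j : ι // j ∈ A} → Fin n) × ({j : ι // j ∉ A} → Fin n)),
          c (mkp A w.1 w.2) ^ 2 * Q w.1 ^ ((p₁ - 2)/2) = W₁ := by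
        rw [Fintype.sum_prod_type, hW₁def]
        refine Finset.sum_congr rfl fun u _ => ?_
        dsimp only
        rw [← Finset.sum_mul, show (∑ v : {j : ι // j ∉ A} → Fin n, c (mkp A u v) ^ 2) = Q u
          from rfl, self_mul_rpow (hQ0 u)
            (by rw [show (p₁-2)/2 + 1 = p₁/2 by ring]; exact ne_of_gt (by linarith)),
          show (p₁-2)/2 + 1 = p₁/2 by ring]
      have hsum_f₃ : ∑ w : (({j : ι // j ∈ A} → Fin n) × ({j : ι // j ∉ A} → Fin n)),
          Q w.1 ^ (p₁/2) * P w.2 ^ (p₂/2) = W₁ * W₂ := by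
        rw [Fintype.sum_prod_type, hW₁def, hW₂def, Finset.sum_mul_sum]
      -- Hölder
      have hHolder : ∑ w : (({j : ι // j ∈ A} → Fin n) × ({j : ι // j ∉ A} → Fin n)),
          |c (mkp A w.1 w.2)| ^ ρ ≤ W₂ ^ θ₁ * W₁ ^ θ₂ * (W₁ * W₂) ^ θ₃ := by
        have h3 := sum_geom3 hθ₁0 hθ₂0 hθ₃0 hθsum
          (fun w : (({j : ι // j ∈ A} → Fin n) × ({j : ι // j ∉ A} → Fin n)) =>
            c (mkp A w.1 w.2) ^ 2 * P w.2 ^ ((p₂ - 2)/2))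
          (fun w => c (mkp A w.1 w.2) ^ 2 * Q w.1 ^ ((p₁ - 2)/2))
          (fun w => Q w.1 ^ (p₁/2) * P w.2 ^ (p₂/2))
          (fun w => mul_nonneg (sq_nonneg _) (Real.rpow_nonneg (hP0 w.2) _))
          (fun w => mul_nonneg (sq_nonneg _) (Real.rpow_nonneg (hQ0 w.1) _))
          (fun w => mul_nonneg (Real.rpow_nonneg (hQ0 w.1) _) (Real.rpow_nonneg (hP0 w.2) _))
        rw [hsum_f₁, hsum_f₂, hsum_f₃] at h3
        calc ∑ w : (({j : ι // j ∈ A} → Fin n) × ({j : ι // j ∉ A} → Fin n)),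
            |c (mkp A w.1 w.2)| ^ ρ
            = ∑ w : (({j : ι // j ∈ A} → Fin n) × ({j : ι // j ∉ A} → Fin n)),
                (c (mkp A w.1 w.2) ^ 2 * P w.2 ^ ((p₂ - 2)/2)) ^ θ₁
                * (c (mkp A w.1 w.2) ^ 2 * Q w.1 ^ ((p₁ - 2)/2)) ^ θ₂
                * (Q w.1 ^ (p₁/2) * P w.2 ^ (p₂/2)) ^ θ₃ :=
              Finset.sum_congr rfl fun w _ => hpoint w.1 w.2
          _ ≤ _ := h3
      -- transport of the left-hand side
      have hLHS : ∑ i : ι → Fin n, |c i| ^ ρ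
          = ∑ w : (({j : ι // j ∈ A} → Fin n) × ({j : ι // j ∉ A} → Fin n)),
              |c (mkp A w.1 w.2)| ^ ρ := by
        rw [sum_split A (fun i => |c i| ^ ρ), Fintype.sum_prod_type]
      -- bound W₁
      set D : ℝ := (3:ℝ) ^ ((t:ℝ)/2) * s with hD
      have hD0 : 0 ≤ D := mul_nonneg (Real.rpow_nonneg (by norm_num) _) hs0
      have hW₁bound : W₁ ≤ 3 ^ ((m₂:ℝ) * (2 - p₁)/2) * D ^ p₁ := by
        have hper : ∀ u : {j : ι // j ∈ A} → Fin n,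
            Q u ^ (p₁/2) ≤ 3 ^ ((m₂:ℝ) * (2-p₁)/2)
              * avg (fun x₂ : {j : ι // j ∉ A} → Fin n → Bool =>
                  |Gf (fun v => c (mkp A u v)) x₂| ^ p₁) := fun u =>
          chaos_khintchine (n := n) m₂ {j : ι // j ∉ A} cardR p₁ hp₁1 hp₁2
            (fun v => c (mkp A u v))
        calc W₁ ≤ ∑ u : {j : ι // j ∈ A} → Fin n, 3 ^ ((m₂:ℝ) * (2-p₁)/2)
              * avg (fun x₂ : {j : ι // j ∉ A} → Fin n → Bool =>
                  |Gf (fun v => c (mkp A u v)) x₂| ^ p₁) :=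
            Finset.sum_le_sum fun u _ => hper u
          _ = 3 ^ ((m₂:ℝ) * (2-p₁)/2) * avg (fun x₂ : {j : ι // j ∉ A} → Fin n → Bool =>
              ∑ u : {j : ι // j ∈ A} → Fin n, |Gf (fun v => c (mkp A u v)) x₂| ^ p₁) := by
            rw [← Finset.mul_sum, avg_sum Finset.univ
              (fun u x₂ => |Gf (fun v => c (mkp A u v)) x₂| ^ p₁)]
          _ ≤ 3 ^ ((m₂:ℝ) * (2-p₁)/2) * D ^ p₁ := by
            apply mul_le_mul_of_nonneg_left _ (Real.rpow_nonneg (by norm_num) _)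
            apply avg_le_of_le
            intro x₂
            have hcLbound : ∀ x₁ : {j : ι // j ∈ A} → Fin n → Bool,
                |Gf (fun u => Gf (fun v => c (mkp A u v)) x₂) x₁| ≤ s := by
              intro x₁
              have hgg : Gf (fun u => Gf (fun v => c (mkp A u v)) x₂) x₁
                  = Gf c (mkp A x₁ x₂) := by
                rw [Gf_split A c x₁ x₂]
                unfold Gf
                refine Finset.sum_congr rfl fun u _ => ?_
                rw [Finset.sum_mul]
                exact Finset.sum_congr rfl fun v _ => by ring
              rw [hgg]; exact hbound _
            have hIH := ih {j : ι // j ∈ A} (by rw [cardL]; exact hm₁1)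
              (by rw [cardL]) (fun u => Gf (fun v => c (mkp A u v)) x₂) s hcLbound
            rw [cardL, ← hp₁, ← hD] at hIH
            exact hIH
      -- bound W₂
      have hW₂bound : W₂ ≤ 3 ^ ((m₁:ℝ) * (2 - p₂)/2) * D ^ p₂ := by
        have hper : ∀ v : {j : ι // j ∉ A} → Fin n,
            P v ^ (p₂/2) ≤ 3 ^ ((m₁:ℝ) * (2-p₂)/2)
              * avg (fun x₁ : {j : ι // j ∈ A} → Fin n → Bool =>
                  |Gf (fun u => c (mkp A u v)) x₁| ^ p₂) := fun v =>
          chaos_khintchine (n := n) m₁ {j : ι // j ∈ A} cardL p₂ hp₂1 hp₂2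
            (fun u => c (mkp A u v))
        calc W₂ ≤ ∑ v : {j : ι // j ∉ A} → Fin n, 3 ^ ((m₁:ℝ) * (2-p₂)/2)
              * avg (fun x₁ : {j : ι // j ∈ A} → Fin n → Bool =>
                  |Gf (fun u => c (mkp A u v)) x₁| ^ p₂) :=
            Finset.sum_le_sum fun v _ => hper v
          _ = 3 ^ ((m₁:ℝ) * (2-p₂)/2) * avg (fun x₁ : {j : ι // j ∈ A} → Fin n → Bool =>
              ∑ v : {j : ι // j ∉ A} → Fin n, |Gf (fun u => c (mkp A u v)) x₁| ^ p₂) := by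
            rw [← Finset.mul_sum, avg_sum Finset.univ
              (fun v x₁ => |Gf (fun u => c (mkp A u v)) x₁| ^ p₂)]
          _ ≤ 3 ^ ((m₁:ℝ) * (2-p₂)/2) * D ^ p₂ := by
            apply mul_le_mul_of_nonneg_left _ (Real.rpow_nonneg (by norm_num) _)
            apply avg_le_of_le
            intro x₁
            have hcRbound : ∀ x₂ : {j : ι // j ∉ A} → Fin n → Bool,
                |Gf (fun v => Gf (fun u => c (mkp A u v)) x₁) x₂| ≤ s := by
              intro x₂
              have hgg : Gf (fun v => Gf (fun u => c (mkp A u v)) x₁) x₂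
                  = Gf c (mkp A x₁ x₂) := by
                rw [Gf_split A c x₁ x₂, Finset.sum_comm]
                unfold Gf
                refine Finset.sum_congr rfl fun v _ => ?_
                rw [Finset.sum_mul]
                exact Finset.sum_congr rfl fun u _ => by ring
              rw [hgg]; exact hbound _
            have hIH := ih {j : ι // j ∉ A} (by rw [cardR]; exact hm₂1)
              (by rw [cardR]; exact hm₂t) (fun v => Gf (fun u => c (mkp A u v)) x₁) s hcRbound
            rw [cardR, ← hp₂, ← hD] at hIH
            exact hIH
      -- put the pieces together
      have hmain : ∑ i : ι → Fin n, |c i| ^ ρ ≤ W₁ ^ (θ₂ + θ₃) * W₂ ^ (θ₁ + θ₃) := by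
        rw [hLHS]
        refine le_trans hHolder (le_of_eq ?_)
        rw [Real.mul_rpow hW₁0 hW₂0, ← rpow_add_nonneg hW₁0 hθ₂0 hθ₃0,
          ← rpow_add_nonneg hW₂0 hθ₁0 hθ₃0]
        ring
      have hB1 : W₁ ^ (θ₂ + θ₃) ≤ (3 ^ ((m₂:ℝ) * (2 - p₁)/2) * D ^ p₁) ^ (θ₂ + θ₃) :=
        Real.rpow_le_rpow hW₁0 hW₁bound (by positivity)
      have hB2 : W₂ ^ (θ₁ + θ₃) ≤ (3 ^ ((m₁:ℝ) * (2 - p₂)/2) * D ^ p₂) ^ (θ₁ + θ₃) :=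
        Real.rpow_le_rpow hW₂0 hW₂bound (by positivity)
      have hcollapse : (3 ^ ((m₂:ℝ) * (2 - p₁)/2) * D ^ p₁) ^ (θ₂ + θ₃)
          * (3 ^ ((m₁:ℝ) * (2 - p₂)/2) * D ^ p₂) ^ (θ₁ + θ₃)
          = ((3:ℝ) ^ (((t:ℝ) + 1)/2) * s) ^ ρ := by
        have h3nn : (0:ℝ) ≤ 3 ^ ((m₂:ℝ) * (2 - p₁)/2) := Real.rpow_nonneg (by norm_num) _
        have h3nn' : (0:ℝ) ≤ 3 ^ ((m₁:ℝ) * (2 - p₂)/2) := Real.rpow_nonneg (by norm_num) _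
        rw [Real.mul_rpow h3nn (Real.rpow_nonneg hD0 _),
          Real.mul_rpow h3nn' (Real.rpow_nonneg hD0 _),
          ← Real.rpow_mul (by norm_num : (0:ℝ) ≤ 3), ← Real.rpow_mul (by norm_num : (0:ℝ) ≤ 3),
          ← Real.rpow_mul hD0, ← Real.rpow_mul hD0]
        have e1 : (m₂:ℝ) * (2 - p₁)/2 * (θ₂ + θ₃) + (m₁:ℝ) * (2 - p₂)/2 * (θ₁ + θ₃)
            = ρ / 2 := by
          rw [hp₁, hp₂, hθ₁, hθ₂, hθ₃, hρ, hμm]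
          field_simp
          ring
        have e2 : p₁ * (θ₂ + θ₃) + p₂ * (θ₁ + θ₃) = ρ := by
          rw [hp₁, hp₂, hθ₁, hθ₂, hθ₃, hρ, hμm]
          field_simp
        calc 3 ^ ((m₂:ℝ) * (2 - p₁)/2 * (θ₂ + θ₃)) * D ^ (p₁ * (θ₂ + θ₃))
              * (3 ^ ((m₁:ℝ) * (2 - p₂)/2 * (θ₁ + θ₃)) * D ^ (p₂ * (θ₁ + θ₃)))
            = (3 ^ ((m₂:ℝ) * (2 - p₁)/2 * (θ₂ + θ₃)) * 3 ^ ((m₁:ℝ) * (2 - p₂)/2 * (θ₁ + θ₃)))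
              * (D ^ (p₁ * (θ₂ + θ₃)) * D ^ (p₂ * (θ₁ + θ₃))) := by ring
          _ = 3 ^ (ρ/2) * D ^ ρ := by
              rw [← Real.rpow_add (by norm_num : (0:ℝ) < 3), e1]
              rcases eq_or_lt_of_le hD0 with hDz | hDz
              · rw [← hDz, Real.zero_rpow (ne_of_gt (mul_pos hp₁0 (by linarith))),
                  Real.zero_rpow (ne_of_gt (mul_pos hp₂0 (by linarith))),
                  Real.zero_rpow hρ0.ne', mul_zero, mul_zero]
              · rw [← Real.rpow_add hDz, e2]
          _ = ((3:ℝ) ^ (((t:ℝ) + 1)/2) * s) ^ ρ := by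
              rw [hD, Real.mul_rpow (Real.rpow_nonneg (by norm_num) _) hs0,
                Real.mul_rpow (Real.rpow_nonneg (by norm_num) _) hs0,
                ← Real.rpow_mul (by norm_num : (0:ℝ) ≤ 3),
                ← Real.rpow_mul (by norm_num : (0:ℝ) ≤ 3), ← mul_assoc,
                ← Real.rpow_add (by norm_num : (0:ℝ) < 3)]
              congr 2
              ring
      have hfinal : ∑ i : ι → Fin n, |c i| ^ ρ ≤ ((3:ℝ) ^ (((t:ℝ) + 1)/2) * s) ^ ρ := by
        calc ∑ i : ι → Fin n, |c i| ^ ρ ≤ W₁ ^ (θ₂ + θ₃) * W₂ ^ (θ₁ + θ₃) := hmain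
          _ ≤ (3 ^ ((m₂:ℝ) * (2 - p₁)/2) * D ^ p₁) ^ (θ₂ + θ₃)
              * (3 ^ ((m₁:ℝ) * (2 - p₂)/2) * D ^ p₂) ^ (θ₁ + θ₃) :=
            mul_le_mul hB1 hB2 (Real.rpow_nonneg hW₂0 _) (Real.rpow_nonneg
              (mul_nonneg (Real.rpow_nonneg (by norm_num) _) (Real.rpow_nonneg hD0 _)) _)
          _ = _ := hcollapse
      rw [show (((t+1:ℕ)):ℝ) = (t:ℝ) + 1 by push_cast; ring]
      exact hfinal

end AASC

/-- A special case of the Aaronson–Ambainis conjecture: there is a universal constant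
`C > 0` such that for every bounded `k`-linear form
`f(x¹,…,xᵏ) = ∑ f̂_{i_1,…,i_k} x¹_{i_1} ⋯ xᵏ_{i_k}` with `‖f‖_∞ ≤ 1` over `{±1}ⁿ`
inputs and all coefficients of the form `f̂_{i_1,…,i_k} = ±α` for a fixed `α ≥ 0`,
every variable `(j, ℓ)` satisfies `Var(f)² ≤ C k³ I_{(j,ℓ)}(f)`, where
`Var(f) = ∑ f̂_{i_1,…,i_k}²` and `I_{(j,ℓ)}(f) = ∑_{i : i_j = ℓ} f̂_{i_1,…,i_k}²`. -/
theorem aaronson_ambainis_special_case :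
    ∃ C : ℝ, 0 < C ∧ ∀ k n : ℕ, ∀ α : ℝ, 0 ≤ α →
      ∀ c : (Fin k → Fin n) → ℝ,
      (∀ i, c i = α ∨ c i = -α) →
      (∀ x : Fin k → Fin n → Bool,
        |∑ i : Fin k → Fin n, c i * ∏ j, (if x j (i j) then (1 : ℝ) else -1)| ≤ 1) →
      ∀ (j : Fin k) (ℓ : Fin n),
        (∑ i : Fin k → Fin n, (c i) ^ 2) ^ 2
          ≤ C * (k : ℝ) ^ 3 * ∑ i ∈ Finset.univ.filter fun i : Fin k → Fin n => i j = ℓ, (c i) ^ 2 := by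
  classical
  refine ⟨3, by norm_num, ?_⟩
  intro k n α hα c hc hbound j ℓ
  have hk1 : 1 ≤ k := j.pos
  have hn1 : 1 ≤ n := ℓ.pos
  obtain ⟨k', rfl⟩ : ∃ k', k = k' + 1 := ⟨k - 1, by omega⟩
  have hsq : ∀ i : Fin (k'+1) → Fin n, c i ^ 2 = α ^ 2 := fun i => by
    rcases hc i with h | h <;> rw [h] <;> ring
  have habs : ∀ i : Fin (k'+1) → Fin n, |c i| = α := fun i => by
    rcases hc i with h | h
    · rw [h, abs_of_nonneg hα]
    · rw [h, abs_neg, abs_of_nonneg hα]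
  rcases eq_or_lt_of_le hα with hα0 | hα0
  · have hz : ∀ i : Fin (k'+1) → Fin n, c i ^ 2 = 0 := fun i => by
      rw [hsq i, ← hα0]; ring
    rw [Finset.sum_eq_zero fun i _ => hz i, Finset.sum_eq_zero fun i _ => hz i]
    norm_num
  -- main case : α > 0
  set t := Nat.clog 2 (k'+1) with ht
  have hk2t : k' + 1 ≤ 2 ^ t := Nat.le_pow_clog (by norm_num) (k'+1)
  set ρ : ℝ := 2 * ((k' + 1 : ℕ) : ℝ) / (((k' + 1 : ℕ) : ℝ) + 1) with hρ
  have hkR : (1:ℝ) ≤ ((k' + 1 : ℕ) : ℝ) := by exact_mod_cast hk1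
  have hρ0 : (0:ℝ) < ρ := by
    rw [hρ]; apply div_pos <;> linarith
  have hBH := AASC.BH (n := n) t (Fin (k'+1))
    (by rw [Fintype.card_fin]; exact hk1) (by rw [Fintype.card_fin]; exact hk2t)
    c 1 (fun x => by
      have h := hbound x
      simpa [AASC.Gf, AASC.Chi, AASC.sg] using h)
  rw [Fintype.card_fin, ← hρ] at hBH
  have hcard : Fintype.card (Fin (k'+1) → Fin n) = n ^ (k'+1) := by
    rw [Fintype.card_fun, Fintype.card_fin, Fintype.card_fin]
  have hLHS : ∑ i : Fin (k'+1) → Fin n, |c i| ^ ρ = (n:ℝ) ^ (k'+1) * α ^ ρ := by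
    rw [Finset.sum_congr rfl (fun i _ => by rw [habs i]), Finset.sum_const, Finset.card_univ,
      hcard, nsmul_eq_mul]
    push_cast
    ring
  rw [hLHS] at hBH
  -- extract α² n^{k+2} ≤ 3^t
  have hNnn : (0:ℝ) ≤ (n:ℝ) ^ (k'+1) * α ^ ρ :=
    mul_nonneg (by positivity) (Real.rpow_nonneg hα _)
  have hkey := Real.rpow_le_rpow hNnn hBH (le_of_lt (div_pos two_pos hρ0))
  have hA2 : ((n:ℝ) ^ (k'+1) * α ^ ρ) ^ (2/ρ) = (n:ℝ) ^ (k'+2) * α ^ 2 := by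
    rw [Real.mul_rpow (by positivity) (Real.rpow_nonneg hα _),
      ← Real.rpow_natCast (n:ℝ) (k'+1), ← Real.rpow_mul (Nat.cast_nonneg n),
      ← Real.rpow_mul hα,
      show ((k'+1 : ℕ) : ℝ) * (2/ρ) = ((k'+2 : ℕ) : ℝ) from by
        rw [hρ]; push_cast; field_simp; ring,
      show ρ * (2/ρ) = ((2:ℕ) : ℝ) from by
        push_cast; field_simp,
      Real.rpow_natCast, Real.rpow_natCast]
  have hB2 : (((3:ℝ) ^ ((t:ℝ)/2) * 1) ^ ρ) ^ (2/ρ) = (3:ℝ) ^ t := by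
    rw [mul_one, ← Real.rpow_mul (Real.rpow_nonneg (by norm_num) _),
      ← Real.rpow_mul (by norm_num : (0:ℝ) ≤ 3),
      show (t:ℝ)/2 * (ρ * (2/ρ)) = ((t:ℕ) : ℝ) from by
        push_cast; field_simp,
      Real.rpow_natCast]
  rw [hA2, hB2] at hkey
  -- the constant bound : 3^t ≤ 3 k³
  have h3t : (3:ℝ) ^ t ≤ 3 * ((k' + 1 : ℕ) : ℝ) ^ 3 := by
    have hnat : (3:ℕ) ^ t ≤ 3 * (k'+1) ^ 3 := by
      rcases Nat.lt_or_ge (k'+1) 2 with hk2 | hk2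
      · have ht0 : t = 0 := by
          have h := (Nat.clog_le_iff_le_pow (by norm_num : 1 < 2)).mpr
            (show k' + 1 ≤ 2 ^ 0 by omega)
          omega
        rw [ht0]
        have h1 : 1 ≤ (k'+1)^3 := Nat.one_le_pow _ _ (by omega)
        omega
      · have ht1 : 1 ≤ t := by
          rw [ht]; exact Nat.clog_pos (by norm_num) hk2
        have hlt : 2 ^ (t-1) < k' + 1 := by
          by_contra hcon
          push_neg at hcon
          have h := (Nat.clog_le_iff_le_pow (by norm_num : 1 < 2)).mpr hcon
          omega
        calc (3:ℕ) ^ t = 3 * 3 ^ (t-1) := by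
              rw [← pow_succ']
              congr 1
              omega
          _ ≤ 3 * 4 ^ (t-1) := Nat.mul_le_mul_left 3 (Nat.pow_le_pow_left (by norm_num) _)
          _ = 3 * (2 ^ (t-1)) ^ 2 := by
              rw [show (4:ℕ) = 2^2 by norm_num, ← pow_mul, ← pow_mul, Nat.mul_comm 2 (t-1)]
          _ ≤ 3 * (k'+1) ^ 2 := Nat.mul_le_mul_left 3 (Nat.pow_le_pow_left (le_of_lt hlt) 2)
          _ ≤ 3 * (k'+1) ^ 3 :=
              Nat.mul_le_mul_left 3 (Nat.pow_le_pow_right (by omega) (by norm_num))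
    calc (3:ℝ) ^ t = (((3:ℕ) ^ t : ℕ) : ℝ) := by push_cast; ring
      _ ≤ ((3 * (k'+1) ^ 3 : ℕ) : ℝ) := by exact_mod_cast hnat
      _ = 3 * ((k' + 1 : ℕ) : ℝ) ^ 3 := by push_cast; ring
  -- count the filtered set
  have hfiltercard : (Finset.univ.filter fun i : Fin (k'+1) → Fin n => i j = ℓ).card
      = n ^ k' := by
    have hsub : Fintype.card {j' : Fin (k'+1) // j' ≠ j} = k' := by
      have h := Fintype.card_subtype_compl (fun j' : Fin (k'+1) => j' = j)
      rw [show Fintype.card {j' : Fin (k'+1) // j' ≠ j}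
          = Fintype.card {j' : Fin (k'+1) // ¬ j' = j} from rfl, h,
        Fintype.card_subtype_eq, Fintype.card_fin]
      omega
    have e : {i : Fin (k'+1) → Fin n // i j = ℓ} ≃ ({j' : Fin (k'+1) // j' ≠ j} → Fin n) :=
      { toFun := fun i j' => i.1 j'.1
        invFun := fun w => ⟨fun j'' => if h : j'' = j then ℓ else w ⟨j'', h⟩, dif_pos rfl⟩
        left_inv := fun i => Subtype.ext (funext fun j'' => by
          dsimp only
          by_cases h : j'' = j
          · rw [dif_pos h, h]
            exact i.2.symm
          · rw [dif_neg h])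
        right_inv := fun w => funext fun j' => dif_neg j'.2 }
    have h1 : (Finset.univ.filter fun i : Fin (k'+1) → Fin n => i j = ℓ).card
        = Fintype.card {i : Fin (k'+1) → Fin n // i j = ℓ} := (Fintype.card_subtype _).symm
    rw [h1, Fintype.card_congr e, Fintype.card_fun, hsub, Fintype.card_fin]
  -- final computation
  have hsum_all : ∑ i : Fin (k'+1) → Fin n, c i ^ 2 = (n:ℝ) ^ (k'+1) * α ^ 2 := by
    rw [Finset.sum_congr rfl (fun i _ => hsq i), Finset.sum_const, Finset.card_univ, hcard,
      nsmul_eq_mul]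
    push_cast
    ring
  have hsum_filter : ∑ i ∈ Finset.univ.filter (fun i : Fin (k'+1) → Fin n => i j = ℓ), c i ^ 2
      = (n:ℝ) ^ k' * α ^ 2 := by
    rw [Finset.sum_congr rfl (fun i _ => hsq i), Finset.sum_const, hfiltercard, nsmul_eq_mul]
    push_cast
    ring
  rw [hsum_all, hsum_filter]
  have hrhs0 : (0:ℝ) ≤ (n:ℝ) ^ k' * α ^ 2 := by positivity
  calc ((n:ℝ) ^ (k'+1) * α ^ 2) ^ 2
      = ((n:ℝ) ^ (k'+2) * α ^ 2) * ((n:ℝ) ^ k' * α ^ 2) := by ring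
    _ ≤ (3 * ((k' + 1 : ℕ) : ℝ) ^ 3) * ((n:ℝ) ^ k' * α ^ 2) :=
        mul_le_mul_of_nonneg_right (le_trans hkey h3t) hrhs0
    _ = 3 * ((k' + 1 : ℕ) : ℝ) ^ 3 * ((n:ℝ) ^ k' * α ^ 2) := by ring
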